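/- As z → 1 (with z ≠ 0, z ≠ 1), the scalar (1 − z⁻¹)^ℓ · trace(Φ(z)) converges to d = ∏_{m=1}^{ℓ}(1 + β_{m−1}⁻¹·α_m)(1 + α_m⁻¹·β_m), where by convention β₀ = β_ℓ. -/

import Mathlib

open Matrix Filter Complex

/-- The odd transition matrix `φ_{2i-1}(z) = [[1, α⁻¹z⁻¹],[α, 1]]`. -/
noncomputable def phiOdd (a z : ℂ) : Matrix (Fin 2) (Fin 2) ℂ :=
  !![1, a⁻¹ * z⁻¹; a, 1]

/-- The even transition matrix `φ_{2i}(z) = (1 - z⁻¹)⁻¹ • [[1, β⁻¹z⁻¹],[β, 1]]`. -/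
noncomputable def phiEven (b z : ℂ) : Matrix (Fin 2) (Fin 2) ℂ :=
  (1 - z⁻¹)⁻¹ • !![1, b⁻¹ * z⁻¹; b, 1]

/-- The ordered product `Φ(z) = φ₁(z) φ₂(z) ⋯ φ_{2ℓ}(z)`, with the weights
`α_i, β_i` (for `i = 1, …, ℓ`) of the (2×ℓ)-periodic Aztec diamond. -/
noncomputable def Phi (ℓ : ℕ) (α β : ℕ → ℝ) (z : ℂ) : Matrix (Fin 2) (Fin 2) ℂ :=
  ((List.range ℓ).map (fun i => phiOdd (α (i + 1)) z * phiEven (β (i + 1)) z)).prod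

/-- As z → 1 (z ≠ 0, 1), the scalar (1 - z⁻¹)^ℓ · trace Φ(z) converges to
d = ∏_{m=1}^{ℓ}(1 + β_{m-1}⁻¹α_m)(1 + α_m⁻¹β_m), with the convention β₀ = β_ℓ. -/
noncomputable def Nmat (b w : ℂ) : Matrix (Fin 2) (Fin 2) ℂ := !![1, b⁻¹ * w; b, 1]
noncomputable def rk (u v : ℂ) : Matrix (Fin 2) (Fin 2) ℂ := !![1, v; u, u * v]

lemma rk_mul (u v b : ℂ) (hb : b ≠ 0) :
    rk u v * !![1, b⁻¹; b, 1] = (1 + v * b) • rk u b⁻¹ := by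
  ext i j
  fin_cases i <;> fin_cases j <;>
    simp only [rk, Matrix.mul_apply, Fin.sum_univ_two, Matrix.smul_apply,
      Matrix.cons_val', Matrix.cons_val_zero, Matrix.cons_val_one, Matrix.head_cons,
      Matrix.empty_val', Matrix.cons_val_fin_one, Matrix.head_fin_const, smul_eq_mul,
      Fin.zero_eta, Fin.mk_one, Matrix.of_apply] <;>
    field_simp <;> ring

lemma Nmat_one (a : ℂ) (ha : a ≠ 0) : Nmat a 1 = rk a a⁻¹ := by
  unfold Nmat rk
  rw [mul_one, mul_inv_cancel₀ ha]

lemma trace_rk (u v : ℂ) : Matrix.trace (rk u v) = 1 + u * v := by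
  simp [rk, Matrix.trace_fin_two]

lemma cont_Nmat (b : ℂ) : Continuous fun w : ℂ => Nmat b w := by
  apply continuous_matrix
  intro i j
  fin_cases i <;> fin_cases j <;> simp [Nmat] <;> continuity

lemma cont_listprod (l : List ℕ) (f : ℕ → ℂ → Matrix (Fin 2) (Fin 2) ℂ)
    (hf : ∀ i, Continuous (f i)) :
    Continuous fun w => (l.map (fun i => f i w)).prod := by
  induction l with
  | nil => simpa using continuous_const
  | cons a t ih => simpa using (hf a).matrix_mul ih

lemma prod_smul (c : ℂ) (l : List ℕ) (f : ℕ → Matrix (Fin 2) (Fin 2) ℂ) :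
    (l.map (fun i => c • f i)).prod = c ^ l.length • (l.map f).prod := by
  induction l with
  | nil => simp
  | cons a t ih =>
      simp [ih, smul_mul_assoc, mul_smul_comm, pow_succ, smul_smul, mul_comm]

lemma prod_formula (α β : ℕ → ℝ) (hα : ∀ i, 0 < α i) (hβ : ∀ i, 0 < β i) :
    ∀ n, 1 ≤ n →
      ((List.range n).map (fun i => Nmat (α (i + 1)) 1 * Nmat (β (i + 1)) 1)).prod
        = (∏ k ∈ Finset.range n,
            ((1 + ((α (k + 1) : ℂ))⁻¹ * (β (k + 1) : ℂ)) *
              (if k = 0 then 1 else (1 + ((β k : ℂ))⁻¹ * (α (k + 1) : ℂ))))) •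
          rk (α 1 : ℂ) ((β n : ℂ))⁻¹ := by
  have hαc : ∀ i, (α i : ℂ) ≠ 0 := fun i => Complex.ofReal_ne_zero.2 (hα i).ne'
  have hβc : ∀ i, (β i : ℂ) ≠ 0 := fun i => Complex.ofReal_ne_zero.2 (hβ i).ne'
  intro n hn
  induction n, hn using Nat.le_induction with
  | base =>
      have h1 : List.range 1 = [0] := rfl
      rw [h1]
      simp only [List.map_cons, List.map_nil, List.prod_cons, List.prod_nil, mul_one,
        Finset.range_one, Finset.prod_singleton, if_pos rfl, zero_add]
      rw [Nmat_one _ (hαc 1)]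
      have hb : Nmat (β 1 : ℂ) 1 = !![1, ((β 1 : ℂ))⁻¹; (β 1 : ℂ), 1] := by
        unfold Nmat; rw [mul_one]
      rw [hb, rk_mul _ _ _ (hβc 1)]; simp
  | succ n hn ih =>
      rw [List.range_succ, List.map_append, List.prod_append, ih]
      simp only [List.map_cons, List.map_nil, List.prod_cons, List.prod_nil, mul_one]
      rw [Nmat_one _ (hαc (n + 1))]
      have hb : Nmat (β (n + 1) : ℂ) 1 = !![1, ((β (n + 1) : ℂ))⁻¹; (β (n + 1) : ℂ), 1] := by
        unfold Nmat; rw [mul_one]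
      have ha : rk (α (n+1) : ℂ) ((α (n+1) : ℂ))⁻¹ = !![1, ((α (n+1) : ℂ))⁻¹; (α (n+1) : ℂ), 1] := by
        unfold rk; rw [mul_inv_cancel₀ (hαc (n+1))]
      rw [smul_mul_assoc, ← mul_assoc, ha, rk_mul _ _ _ (hαc (n+1)),
        smul_mul_assoc, hb, rk_mul _ _ _ (hβc (n+1))]
      rw [Finset.prod_range_succ, smul_smul, smul_smul]
      congr 1
      rw [if_neg (by omega : ¬ n = 0)]
      ring

theorem stmt5 (ℓ : ℕ) (hℓ : 1 ≤ ℓ) (α β : ℕ → ℝ)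
    (hα : ∀ i, 0 < α i) (hβ : ∀ i, 0 < β i) :
    Tendsto (fun z : ℂ => (1 - z⁻¹) ^ ℓ * Matrix.trace (Phi ℓ α β z))
      (nhdsWithin 1 {z : ℂ | z ≠ 0 ∧ z ≠ 1})
      (nhds ((∏ k ∈ Finset.range ℓ,
          ((1 + (β (if k = 0 then ℓ else k))⁻¹ * α (k + 1)) *
            (1 + (α (k + 1))⁻¹ * β (k + 1))) : ℝ) : ℂ)) := by
  have hαc : ∀ i, (α i : ℂ) ≠ 0 := fun i => Complex.ofReal_ne_zero.2 (hα i).ne'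
  have hβc : ∀ i, (β i : ℂ) ≠ 0 := fun i => Complex.ofReal_ne_zero.2 (hβ i).ne'
  set Gf : ℂ → ℂ := fun w =>
    Matrix.trace (((List.range ℓ).map
      (fun i => Nmat (α (i + 1)) w * Nmat (β (i + 1)) w)).prod) with hGf
  -- eventual equality
  have key : ∀ z ∈ {z : ℂ | z ≠ 0 ∧ z ≠ 1},
      (1 - z⁻¹) ^ ℓ * Matrix.trace (Phi ℓ α β z) = Gf z⁻¹ := by
    intro z hz
    obtain ⟨hz0, hz1⟩ := hz
    have hc : (1 : ℂ) - z⁻¹ ≠ 0 := by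
      intro h
      exact hz1 (inv_eq_one.mp (sub_eq_zero.mp h).symm)
    have hfac : (fun i => phiOdd (α (i + 1)) z * phiEven (β (i + 1)) z)
        = fun i => (1 - z⁻¹)⁻¹ • (Nmat (α (i + 1)) z⁻¹ * Nmat (β (i + 1)) z⁻¹) := by
      funext i
      show phiOdd _ z * ((1 - z⁻¹)⁻¹ • _) = _
      rw [mul_smul_comm]
      rfl
    rw [Phi, hfac, prod_smul, List.length_range, Matrix.trace_smul, smul_eq_mul,
      ← mul_assoc, ← mul_pow, mul_inv_cancel₀ hc, one_pow, one_mul]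
  -- continuity
  have hGcont : Continuous Gf := by
    apply Continuous.matrix_trace
    exact cont_listprod _ _ (fun i => (cont_Nmat _).matrix_mul (cont_Nmat _))
  have hinv : Tendsto (fun z : ℂ => z⁻¹) (nhdsWithin 1 {z : ℂ | z ≠ 0 ∧ z ≠ 1}) (nhds 1) := by
    have h := (continuousAt_inv₀ (one_ne_zero (α := ℂ))).tendsto
    rw [inv_one] at h
    exact h.mono_left nhdsWithin_le_nhds
  have hT : Tendsto (fun z : ℂ => Gf z⁻¹)
      (nhdsWithin 1 {z : ℂ | z ≠ 0 ∧ z ≠ 1}) (nhds (Gf 1)) :=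
    (hGcont.tendsto 1).comp hinv
  -- value at 1
  have hval : Gf 1 = ((∏ k ∈ Finset.range ℓ,
      ((1 + (β (if k = 0 then ℓ else k))⁻¹ * α (k + 1)) *
        (1 + (α (k + 1))⁻¹ * β (k + 1))) : ℝ) : ℂ) := by
    rw [hGf]
    simp only []
    rw [prod_formula α β hα hβ ℓ hℓ, Matrix.trace_smul, trace_rk, smul_eq_mul]
    push_cast
    have hsplit : ∀ k ∈ Finset.range ℓ,
        ((1 + ((β (if k = 0 then ℓ else k) : ℝ) : ℂ)⁻¹ * ((α (k + 1) : ℝ) : ℂ)) *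
          (1 + ((α (k + 1) : ℝ) : ℂ)⁻¹ * ((β (k + 1) : ℝ) : ℂ)))
        = ((1 + ((α (k + 1) : ℝ) : ℂ)⁻¹ * ((β (k + 1) : ℝ) : ℂ)) *
            (if k = 0 then 1 else (1 + ((β k : ℝ) : ℂ)⁻¹ * ((α (k + 1) : ℝ) : ℂ)))) *
          (if k = 0 then (1 + ((β ℓ : ℝ) : ℂ)⁻¹ * ((α 1 : ℝ) : ℂ)) else 1) := by
      intro k _
      rcases eq_or_ne k 0 with h | h <;> simp [h] <;> ring
    rw [Finset.prod_congr rfl hsplit, Finset.prod_mul_distrib,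
      Finset.prod_mul_distrib, Finset.prod_mul_distrib,
      Finset.prod_ite_eq' (Finset.range ℓ) 0
        (fun _ => (1 + ((β ℓ : ℝ) : ℂ)⁻¹ * ((α 1 : ℝ) : ℂ)))]
    rw [if_pos (Finset.mem_range.mpr hℓ)]
    ring
  rw [← hval]
  exact hT.congr' (Filter.eventuallyEq_of_mem self_mem_nhdsWithin
    (fun z hz => (key z hz).symm))
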